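/- Let ε ∈ (0,1] and let P : ℝ → ℝ be a C² function such that P', P'' ∈ L²(ℝ) and P'(x) → 0 as x → ±∞; set u(x) = ∂ₓP(x) − ε ∂ₓₓP(x). Then √ε · ‖∂ₓP‖_{L^∞(ℝ)} ≤ ‖u‖_{L²(ℝ)}. -/

import Mathlib

open MeasureTheory Filter Real Set

theorem stmt1 (ε : ℝ) (hε : ε ∈ Set.Ioc (0:ℝ) 1) (P u : ℝ → ℝ)
    (hP : ContDiff ℝ 2 P)
    (hPx : Integrable (fun x => (deriv P x) ^ 2))
    (hPxx : Integrable (fun x => (iteratedDeriv 2 P x) ^ 2))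
    (hPx_top : Tendsto (deriv P) atTop (nhds 0))
    (hPx_bot : Tendsto (deriv P) atBot (nhds 0))
    (hu : ∀ x, u x = deriv P x - ε * iteratedDeriv 2 P x) :
    ∀ x : ℝ, Real.sqrt ε * |deriv P x| ≤ Real.sqrt (∫ x, (u x) ^ 2) := by
  obtain ⟨hε0, hε1⟩ := hε
  set f : ℝ → ℝ := deriv P with hf
  set g : ℝ → ℝ := deriv (deriv P) with hg
  have hiter : iteratedDeriv 2 P = g := by
    rw [iteratedDeriv_succ, iteratedDeriv_one]
  rw [hiter] at hPxx hu
  -- f is C¹ with derivative g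
  have hP' : ContDiff ℝ 1 f := by
    have h11 : ContDiff ℝ (1 + 1) P := by
      norm_num
      exact hP
    exact (contDiff_succ_iff_deriv.mp h11).2.2
  have hfd : ∀ x, HasDerivAt f (g x) x := fun x =>
    ((hP'.differentiable one_ne_zero) x).hasDerivAt
  have hfc : Continuous f := hP'.continuous
  have hgc : Continuous g := hP'.continuous_deriv le_rfl
  -- integrability of f*g
  have hfg : Integrable (fun x => f x * g x) := by
    have hm : AEStronglyMeasurable (fun x => f x * g x) volume :=
      (hfc.mul hgc).aestronglyMeasurable
    refine Integrable.mono' ((hPx.add hPxx).const_mul (1/2)) hm ?_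
    filter_upwards with x
    have h1 : |f x * g x| ≤ (f x ^ 2 + g x ^ 2) / 2 := by
      rw [abs_le]
      constructor <;> nlinarith [sq_nonneg (f x + g x), sq_nonneg (f x - g x)]
    calc ‖f x * g x‖ = |f x * g x| := rfl
      _ ≤ (f x ^ 2 + g x ^ 2) / 2 := h1
      _ = 1/2 * (f x ^ 2 + g x ^ 2) := by ring
  -- cross term vanishes
  have hsq_deriv : ∀ x, HasDerivAt (fun y => f y ^ 2) (2 * (f x * g x)) x := by
    intro x
    have h : HasDerivAt (fun y => f y * f y) (g x * f x + f x * g x) x := (hfd x).mul (hfd x)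
    have he : (fun y => f y ^ 2) = fun y => f y * f y := by funext y; ring
    rw [he]
    convert h using 1; ring
  have hsq_top : Tendsto (fun y => f y ^ 2) atTop (nhds 0) := by
    have := hPx_top.mul hPx_top
    simpa [pow_two] using this
  have hsq_bot : Tendsto (fun y => f y ^ 2) atBot (nhds 0) := by
    have := hPx_bot.mul hPx_bot
    simpa [pow_two] using this
  have hcross : ∫ x, 2 * (f x * g x) = 0 := by
    rw [MeasureTheory.integral_of_hasDerivAt_of_tendsto hsq_deriv (hfg.const_mul 2)
      hsq_bot hsq_top]
    simp
  have hcross' : ∫ x, f x * g x = 0 := by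
    have h2 : ∫ x, 2 * (f x * g x) = 2 * ∫ x, f x * g x := integral_const_mul 2 _
    linarith [hcross, h2.symm]
  -- compute ∫ u²
  have huu : ∀ x, u x ^ 2 = f x ^ 2 - 2 * ε * (f x * g x) + ε ^ 2 * g x ^ 2 := by
    intro x; rw [hu x]; ring
  have hu_int : Integrable (fun x => u x ^ 2) := by
    have : Integrable (fun x => f x ^ 2 - 2 * ε * (f x * g x) + ε ^ 2 * g x ^ 2) :=
      (hPx.sub (hfg.const_mul (2 * ε))).add (hPxx.const_mul (ε ^ 2))
    exact this.congr (by filter_upwards with x using (huu x).symm)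
  have hIu : ∫ x, u x ^ 2 = (∫ x, f x ^ 2) + ε ^ 2 * ∫ x, g x ^ 2 := by
    calc ∫ x, u x ^ 2
        = ∫ x, (f x ^ 2 - 2 * ε * (f x * g x) + ε ^ 2 * g x ^ 2) := by
          congr 1; funext x; exact huu x
      _ = (∫ x, (f x ^ 2 - 2 * ε * (f x * g x))) + ∫ x, ε ^ 2 * g x ^ 2 :=
          integral_add (hPx.sub (hfg.const_mul (2 * ε))) (hPxx.const_mul (ε ^ 2))
      _ = (∫ x, f x ^ 2) + ε ^ 2 * ∫ x, g x ^ 2 := by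
          rw [integral_sub hPx (hfg.const_mul (2 * ε)), integral_const_mul,
            integral_const_mul, hcross']; ring
  -- pointwise bound on ε f(x)²
  intro x
  have hIic : ∫ y in Iic x, ε * (2 * (f y * g y)) = ε * f x ^ 2 := by
    have hd : ∀ y ∈ Iic x, HasDerivAt (fun z => ε * f z ^ 2) (ε * (2 * (f y * g y))) y :=
      fun y _ => (hsq_deriv y).const_mul ε
    have hb : Tendsto (fun z => ε * f z ^ 2) atBot (nhds 0) := by
      simpa using hsq_bot.const_mul ε
    have := MeasureTheory.integral_Iic_of_hasDerivAt_of_tendsto' hd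
      (((hfg.const_mul 2).const_mul ε).integrableOn) hb
    rw [this]; ring
  have hq_int : Integrable (fun y => f y ^ 2 + ε ^ 2 * g y ^ 2) :=
    hPx.add (hPxx.const_mul (ε ^ 2))
  have hmono : ∫ y in Iic x, ε * (2 * (f y * g y)) ≤ ∫ y in Iic x, (f y ^ 2 + ε ^ 2 * g y ^ 2) := by
    apply setIntegral_mono_on (((hfg.const_mul 2).const_mul ε).integrableOn)
      (hq_int.integrableOn) measurableSet_Iic
    intro y _
    nlinarith [sq_nonneg (f y - ε * g y)]
  have hset_le : ∫ y in Iic x, (f y ^ 2 + ε ^ 2 * g y ^ 2) ≤ ∫ y, (f y ^ 2 + ε ^ 2 * g y ^ 2) := by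
    apply setIntegral_le_integral hq_int
    filter_upwards with y
    positivity
  have hint_eq : ∫ y, (f y ^ 2 + ε ^ 2 * g y ^ 2) = ∫ y, u y ^ 2 := by
    rw [hIu, integral_add hPx (hPxx.const_mul (ε ^ 2)), integral_const_mul]
  have hkey : ε * f x ^ 2 ≤ ∫ y, u y ^ 2 := by
    rw [← hIic, ← hint_eq]
    exact hmono.trans hset_le
  have : Real.sqrt ε * |f x| = Real.sqrt (ε * f x ^ 2) := by
    rw [Real.sqrt_mul hε0.le, Real.sqrt_sq_eq_abs]
  rw [this]
  exact Real.sqrt_le_sqrt hkey
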